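/- Let R be a commutative ring equipped with a subset P of 'non-negative elements' containing 0, closed under addition and multiplication, and satisfying the property that x ∈ P whenever 2x ∈ P. If (a_n) and (b_n) are sequences in P that are strongly log concave (meaning a_j a_k − a_i a_l ∈ P whenever i ≤ j ≤ k ≤ l and j + k = i + l), then their convolution c_m = Σ_{p+q=m} a_p b_q is also strongly log concave. -/

import Mathlib

open Finset

/-- Extension of a sequence on `ℕ` to `ℤ` by zero. -/
private def ext0 {R : Type*} [CommRing R] (v : ℕ → R) : ℤ → R :=
  fun n => if 0 ≤ n then v n.toNat else 0

private lemma ext0_mem {R : Type*} [CommRing R] {P : Set R} (h0 : (0:R) ∈ P)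
    (v : ℕ → R) (hv : ∀ n, v n ∈ P) (n : ℤ) : ext0 v n ∈ P := by
  unfold ext0; split
  · exact hv _
  · exact h0

private lemma key_lemma {R : Type*} [CommRing R] {P : Set R}
    (h0 : (0:R) ∈ P) (hmul : ∀ x y : R, x ∈ P → y ∈ P → x * y ∈ P)
    (v : ℕ → R) (hvP : ∀ n, v n ∈ P)
    (hv : ∀ i j k l : ℕ, i ≤ j → j ≤ k → k ≤ l → j + k = i + l →
      v j * v k - v i * v l ∈ P)
    (s t d : ℤ) (hd : 0 ≤ d) (hst : s ≤ t) :
    ext0 v s * ext0 v (t - d) - ext0 v (s - d) * ext0 v t ∈ P := by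
  rcases lt_or_ge (s - d) 0 with h1 | h1
  · rw [show ext0 v (s - d) = 0 by simp [ext0, not_le.mpr h1]; intro; omega, zero_mul, sub_zero]
    exact hmul _ _ (ext0_mem h0 v hvP _) (ext0_mem h0 v hvP _)
  · have hs : 0 ≤ s := by omega
    have ht : 0 ≤ t := by omega
    have htd : 0 ≤ t - d := by omega
    rw [show ext0 v s = v s.toNat by simp [ext0, hs],
        show ext0 v t = v t.toNat by simp [ext0, ht],
        show ext0 v (t - d) = v (t-d).toNat by simp [ext0, htd]; intro; omega,
        show ext0 v (s - d) = v (s-d).toNat by simp [ext0, h1]; intro; omega]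
    rcases le_total s (t - d) with h2 | h2
    · exact hv (s-d).toNat s.toNat (t-d).toNat t.toNat (by omega) (by omega) (by omega) (by omega)
    · have := hv (s-d).toNat (t-d).toNat s.toNat t.toNat (by omega) (by omega) (by omega) (by omega)
      rw [mul_comm (v s.toNat)]
      exact this

private lemma conv_eq {R : Type*} [CommRing R] (a b : ℕ → R) (m N : ℕ) (e : ℤ)
    (he : 0 ≤ e) (hmN : (m : ℤ) + e ≤ N) :
    ∑ t ∈ range (N + 1), ext0 a ((t : ℤ) - e) * ext0 b ((m : ℤ) + e - t)
      = ∑ p ∈ range (m + 1), a p * b (m - p) := by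
  classical
  have hsub : (range (m+1)).image (· + e.toNat) ⊆ range (N+1) := by
    intro t ht
    simp only [mem_image, mem_range] at ht ⊢
    omega
  rw [← Finset.sum_subset hsub ?vanish]
  · rw [Finset.sum_image (by intro x _ y _ h; simp only at h; omega)]
    refine Finset.sum_congr rfl fun p hp => ?_
    simp only [mem_range] at hp
    rw [show ((p + e.toNat : ℕ) : ℤ) - e = ((p : ℕ) : ℤ) by push_cast; omega,
        show (m:ℤ) + e - ((p + e.toNat : ℕ) : ℤ) = ((m - p : ℕ) : ℤ) by push_cast; omega]
    simp [ext0]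
  case vanish =>
    intro t ht hnot
    simp only [mem_image, mem_range] at hnot
    have hnot' : t < e.toNat ∨ m + e.toNat < t := by
      by_contra hc
      push_neg at hc
      exact hnot ⟨t - e.toNat, by omega, by omega⟩
    rcases hnot' with h | h
    · rw [show ext0 a ((t:ℤ) - e) = 0 by simp [ext0]; omega, zero_mul]
    · rw [show ext0 b ((m:ℤ) + e - t) = 0 by simp [ext0]; omega, mul_zero]

open Finset in
/-- In a commutative ring `R` with a subset `P` of "non-negative elements"
containing `0`, closed under addition and multiplication, and such that
`x ∈ P` whenever `2 * x ∈ P`: the convolution of two strongly log concave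
sequences with values in `P` is strongly log concave. -/
theorem stmt2 {R : Type*} [CommRing R] (P : Set R)
    (h0 : (0 : R) ∈ P)
    (hadd : ∀ x y, x ∈ P → y ∈ P → x + y ∈ P)
    (hmul : ∀ x y, x ∈ P → y ∈ P → x * y ∈ P)
    (hhalf : ∀ x : R, 2 * x ∈ P → x ∈ P)
    (a b : ℕ → R)
    (haP : ∀ n, a n ∈ P) (hbP : ∀ n, b n ∈ P)
    (ha : ∀ i j k l : ℕ, i ≤ j → j ≤ k → k ≤ l → j + k = i + l →
      a j * a k - a i * a l ∈ P)
    (hb : ∀ i j k l : ℕ, i ≤ j → j ≤ k → k ≤ l → j + k = i + l →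
      b j * b k - b i * b l ∈ P) :
    (∀ m : ℕ, (∑ p ∈ range (m + 1), a p * b (m - p)) ∈ P) ∧
    (∀ i j k l : ℕ, i ≤ j → j ≤ k → k ≤ l → j + k = i + l →
      (∑ p ∈ range (j + 1), a p * b (j - p)) * (∑ p ∈ range (k + 1), a p * b (k - p)) -
      (∑ p ∈ range (i + 1), a p * b (i - p)) * (∑ p ∈ range (l + 1), a p * b (l - p)) ∈ P) := by
  have sum_mem : ∀ (s : Finset ℕ) (f : ℕ → R), (∀ x ∈ s, f x ∈ P) → (∑ x ∈ s, f x) ∈ P :=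
    fun s f h => Finset.sum_induction f (· ∈ P) (fun x y hx hy => hadd x y hx hy) h0 h
  constructor
  · intro m
    exact sum_mem _ _ fun p _ => hmul _ _ (haP p) (hbP _)
  · intro i j k l hij hjk hkl hsum
    -- rewrite all four convolutions as sums over `range (l+1)` of `ℤ`-extended terms
    have hcj := conv_eq a b j l 0 le_rfl (by omega)
    have hcl := conv_eq a b l l 0 le_rfl (by omega)
    simp only [sub_zero, add_zero] at hcj hcl
    have hck := conv_eq a b k l ((j:ℤ) - i) (by omega) (by omega)
    have hci := conv_eq a b i l ((j:ℤ) - i) (by omega) (by omega)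
    rw [show (k:ℤ) + ((j:ℤ) - i) = (l:ℤ) by omega] at hck
    rw [show (i:ℤ) + ((j:ℤ) - i) = (j:ℤ) by omega] at hci
    rw [← hcj, ← hck, ← hci, ← hcl]
    set S : ℕ → ℕ → R := fun t1 t2 =>
      ext0 a (t1:ℤ) * ext0 a ((t2:ℤ) - ((j:ℤ) - i)) *
        (ext0 b ((j:ℤ) - t1) * ext0 b ((l:ℤ) - t2) -
         ext0 b ((j:ℤ) - t2) * ext0 b ((l:ℤ) - t1)) with hS
    have expand :
        (∑ t ∈ range (l+1), ext0 a (t:ℤ) * ext0 b ((j:ℤ) - t)) *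
          (∑ t ∈ range (l+1), ext0 a ((t:ℤ) - ((j:ℤ) - i)) * ext0 b ((l:ℤ) - t)) -
        (∑ t ∈ range (l+1), ext0 a ((t:ℤ) - ((j:ℤ) - i)) * ext0 b ((j:ℤ) - t)) *
          (∑ t ∈ range (l+1), ext0 a (t:ℤ) * ext0 b ((l:ℤ) - t))
        = ∑ t1 ∈ range (l+1), ∑ t2 ∈ range (l+1), S t1 t2 := by
      rw [Finset.sum_mul_sum, Finset.sum_mul_sum,
        Finset.sum_comm (s := range (l+1)) (t := range (l+1))
          (f := fun x y => (ext0 a ((x:ℤ) - ((j:ℤ) - i)) * ext0 b ((j:ℤ) - x)) *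
            (ext0 a (y:ℤ) * ext0 b ((l:ℤ) - y))),
        ← Finset.sum_sub_distrib]
      refine Finset.sum_congr rfl fun t1 _ => ?_
      rw [← Finset.sum_sub_distrib]
      refine Finset.sum_congr rfl fun t2 _ => ?_
      rw [hS]; ring
    rw [expand]
    -- symmetrize and use `hhalf`
    apply hhalf
    have pair_mem : ∀ t1 t2 : ℕ, t1 ≤ t2 → S t1 t2 + S t2 t1 ∈ P := by
      intro t1 t2 h12
      have hMa := key_lemma h0 hmul a haP ha (t1:ℤ) (t2:ℤ) ((j:ℤ) - i) (by omega) (by omega)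
      have hMb := key_lemma h0 hmul b hbP hb ((j:ℤ) - t1) ((l:ℤ) - t1) ((t2:ℤ) - t1)
        (by omega) (by omega)
      rw [show ((l:ℤ) - t1) - ((t2:ℤ) - t1) = (l:ℤ) - t2 by ring,
          show ((j:ℤ) - t1) - ((t2:ℤ) - t1) = (j:ℤ) - t2 by ring] at hMb
      have heq : S t1 t2 + S t2 t1 =
          (ext0 a (t1:ℤ) * ext0 a ((t2:ℤ) - ((j:ℤ) - i)) -
            ext0 a ((t1:ℤ) - ((j:ℤ) - i)) * ext0 a (t2:ℤ)) *
          (ext0 b ((j:ℤ) - t1) * ext0 b ((l:ℤ) - t2) -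
            ext0 b ((j:ℤ) - t2) * ext0 b ((l:ℤ) - t1)) := by
        rw [hS]; ring
      rw [heq]
      exact hmul _ _ hMa hMb
    have pair_mem' : ∀ t1 t2 : ℕ, S t1 t2 + S t2 t1 ∈ P := by
      intro t1 t2
      rcases le_total t1 t2 with h | h
      · exact pair_mem _ _ h
      · rw [add_comm]; exact pair_mem _ _ h
    have flip : ∑ t1 ∈ range (l+1), ∑ t2 ∈ range (l+1), S t2 t1
        = ∑ t1 ∈ range (l+1), ∑ t2 ∈ range (l+1), S t1 t2 :=
      Finset.sum_comm (f := fun x y => S y x)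
    have eq2 : 2 * (∑ t1 ∈ range (l+1), ∑ t2 ∈ range (l+1), S t1 t2)
        = ∑ t1 ∈ range (l+1), ∑ t2 ∈ range (l+1), (S t1 t2 + S t2 t1) := by
      simp only [Finset.sum_add_distrib]
      rw [flip, two_mul]
    rw [eq2]
    exact sum_mem _ _ fun t1 _ => sum_mem _ _ fun t2 _ => pair_mem' t1 t2
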